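/- Let 𝔰 be a Lie algebra over a field of characteristic zero and 𝔫 a solvable Lie 𝔰-algebra (completely reducible 𝔰-action) such that [𝔰,D𝔫] = 0, where D𝔫 is the derived subalgebra. Then the subalgebra [𝔰,𝔫] is 2-nilpotent, i.e. [[𝔰,𝔫], D[𝔰,𝔫]] = 0. -/

import Mathlib

/-- If `𝔫` is a solvable Lie `𝔰`-algebra with `[𝔰, D𝔫] = 0`, then the
subalgebra `[𝔰,𝔫]` (generated by the brackets `[s,n]`) is 2-nilpotent, i.e. every
element of `[𝔰,𝔫]` commutes with every bracket of two elements of `[𝔰,𝔫]`. -/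
theorem stmt1 (K : Type*) [Field K] [CharZero K]
    (S : Type*) [LieRing S] [LieAlgebra K S]
    (N : Type*) [LieRing N] [LieAlgebra K N] [Module.Finite K N]
    (_hsolv : LieAlgebra.IsSolvable N)
    (i : S →ₗ⁅K⁆ LieDerivation K N N)
    (_hcr : ∀ p : Submodule K N, (∀ s : S, ∀ x ∈ p, i s x ∈ p) →
      ∃ q : Submodule K N, (∀ s : S, ∀ x ∈ q, i s x ∈ q) ∧ IsCompl p q)
    (hDn : ∀ (s : S) (a b : N), i s ⁅a, b⁆ = 0) :
    ∀ a ∈ LieSubalgebra.lieSpan K N {x | ∃ (s : S) (n : N), i s n = x},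
    ∀ b ∈ LieSubalgebra.lieSpan K N {x | ∃ (s : S) (n : N), i s n = x},
    ∀ c ∈ LieSubalgebra.lieSpan K N {x | ∃ (s : S) (n : N), i s n = x},
      ⁅a, ⁅b, c⁆⁆ = 0 := by
  -- The key: every generator `i s n` centralizes all brackets, and the centralizer
  -- of all brackets is a Lie subalgebra.
  let C : LieSubalgebra K N :=
    { carrier := {a | ∀ b c : N, ⁅a, ⁅b, c⁆⁆ = 0}
      add_mem' := fun {x y} hx hy b c => by rw [add_lie, hx b c, hy b c, add_zero]
      zero_mem' := fun b c => zero_lie _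
      smul_mem' := fun t x hx b c => by rw [smul_lie, hx b c, smul_zero]
      lie_mem' := fun {x y} hx hy b c => by
        rw [lie_lie, hx, hy]; simp }
  have hgen : {x | ∃ (s : S) (n : N), i s n = x} ⊆ C := by
    rintro _ ⟨s, n, rfl⟩ b c
    have h := (i s).apply_lie_eq_add n ⁅b, c⁆
    rw [hDn s n ⁅b, c⁆, hDn s b c, lie_zero, zero_add] at h
    exact h.symm
  have hle : LieSubalgebra.lieSpan K N {x | ∃ (s : S) (n : N), i s n = x} ≤ C :=
    (LieSubalgebra.lieSpan_le).mpr hgen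
  intro a ha b hb c hc
  exact hle ha b c
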